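/- arXiv:2103.00932 — 2 statements merged into one kernel-verified Lean document; each statement's English description precedes it below -/
import Mathlib

section
/- Let q be a nonzero polynomial over ℂ, let z_0 ∈ ℂ and ρ > 0, and assume q has no root on the circle { z : |z − z_0| = ρ }. Let γ : [0,1] → ℂ be the loop γ(t) = z_0 + ρ·exp(2πi t), and let f : [0,1] → ℂ be a continuous function with f(t)² = q(γ(t)) for all t ∈ [0,1]. Then f(1) = (−1)^N · f(0), where N is the number of roots of q, counted with multiplicity, lying in the open disc { z : |z − z_0| < ρ }. -/
open scoped Classical

noncomputable def Sfun (z₀ : ℂ) (ρ : ℝ) (r : ℂ) (t : ℝ) : ℂ :=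
  if ‖r - z₀‖ < ρ then
    (Real.sqrt ρ : ℂ) * Complex.exp (Real.pi * Complex.I * t) *
      (1 + -((r - z₀) / ρ) * Complex.exp (-(2 * Real.pi * Complex.I * t))) ^ (1/2 : ℂ)
  else
    (z₀ - r) ^ (1/2 : ℂ) *
      (1 + ((ρ : ℂ) / (z₀ - r)) * Complex.exp (2 * Real.pi * Complex.I * t)) ^ (1/2 : ℂ)

lemma cpow_half_sq {w : ℂ} (hw : w ≠ 0) : (w ^ (1/2 : ℂ)) ^ 2 = w := by
  rw [sq, ← Complex.cpow_add _ _ hw]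
  norm_num

lemma re_pos_of_abs_lt {z : ℂ} (h : ‖z‖ < 1) : 0 < (1 + z).re := by
  have h1 : |z.re| ≤ ‖z‖ := Complex.abs_re_le_norm z
  have := abs_le.1 h1
  simp only [Complex.add_re, Complex.one_re]
  linarith

lemma abs_exp_mul_I_real (x : ℝ) (t : ℝ) :
    ‖Complex.exp (x * Complex.I * t)‖ = 1 := by
  rw [Complex.norm_exp]
  simp [Complex.mul_re, Complex.mul_im]

example (x t : ℝ) : ‖Complex.exp (-(x * Complex.I * t))‖ = 1 := by
  rw [Complex.norm_exp]
  simp [Complex.mul_re, Complex.mul_im]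

lemma slit_of_abs_lt {z : ℂ} (h : ‖z‖ < 1) : 1 + z ∈ Complex.slitPlane :=
  Or.inl (re_pos_of_abs_lt h)

lemma ne_zero_of_abs_lt {z : ℂ} (h : ‖z‖ < 1) : 1 + z ≠ 0 :=
  Complex.slitPlane_ne_zero (slit_of_abs_lt h)

lemma cont_aux (c : ℂ) (x : ℝ) (h : ‖c‖ < 1) :
    Continuous (fun t : ℝ => (1 + c * Complex.exp (x * Complex.I * t)) ^ (1/2 : ℂ)) := by
  have hF : Continuous (fun t : ℝ => 1 + c * Complex.exp (x * Complex.I * t)) := by fun_prop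
  rw [continuous_iff_continuousAt]
  intro t
  have hs : (1 + c * Complex.exp (x * Complex.I * t)) ∈ Complex.slitPlane := by
    apply slit_of_abs_lt
    rw [norm_mul, abs_exp_mul_I_real, mul_one]
    exact lt_of_le_of_lt (le_of_eq rfl) h
  exact ContinuousAt.cpow hF.continuousAt continuousAt_const hs

lemma inside_abs_lt {z₀ r : ℂ} {ρ : ℝ} (hρ : 0 < ρ) (h : ‖r - z₀‖ < ρ) :
    ‖-((r - z₀) / (ρ:ℂ))‖ < 1 := by
  rw [norm_neg, norm_div, Complex.norm_real, Real.norm_eq_abs, abs_of_pos hρ, div_lt_one hρ]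
  exact h

lemma outside_abs_lt {z₀ r : ℂ} {ρ : ℝ} (hρ : 0 < ρ) (h : ρ < ‖r - z₀‖) :
    ‖(ρ:ℂ) / (z₀ - r)‖ < 1 := by
  have h0 : (0:ℝ) < ‖z₀ - r‖ := by
    rw [norm_sub_rev]; linarith
  rw [norm_div, Complex.norm_real, Real.norm_eq_abs, abs_of_pos hρ, div_lt_one h0, norm_sub_rev]
  exact h

lemma Sfun_continuous {z₀ r : ℂ} {ρ : ℝ} (hρ : 0 < ρ)
    (hr : ‖r - z₀‖ ≠ ρ) : Continuous (Sfun z₀ ρ r) := by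
  rcases lt_or_gt_of_ne hr with hin | hout
  · have hc := inside_abs_lt hρ hin
    have h1 := cont_aux (-((r - z₀) / (ρ:ℂ))) (-(2*Real.pi)) hc
    have h2 : (fun t : ℝ =>
        (1 + -((r - z₀) / (ρ:ℂ)) * Complex.exp (-(2 * Real.pi * Complex.I * t))) ^ (1/2:ℂ)) =
        fun t : ℝ =>
        (1 + -((r - z₀) / (ρ:ℂ)) * Complex.exp ((-(2*Real.pi) : ℝ) * Complex.I * t)) ^ (1/2:ℂ) := by
      funext t; push_cast; ring_nf
    have h3 : Continuous (fun t : ℝ => (Real.sqrt ρ : ℂ) * Complex.exp (Real.pi * Complex.I * t)) := by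
      fun_prop
    have : Continuous (fun t : ℝ =>
        (Real.sqrt ρ : ℂ) * Complex.exp (Real.pi * Complex.I * t) *
        (1 + -((r - z₀) / (ρ:ℂ)) * Complex.exp (-(2 * Real.pi * Complex.I * t))) ^ (1/2:ℂ)) :=
      h3.mul (h2 ▸ h1)
    convert this using 2 with t
    simp [Sfun, if_pos hin]
  · have hc := outside_abs_lt hρ hout
    have h1 := cont_aux ((ρ:ℂ) / (z₀ - r)) (2*Real.pi) hc
    have h2 : (fun t : ℝ =>
        (1 + (ρ:ℂ) / (z₀ - r) * Complex.exp (2 * Real.pi * Complex.I * t)) ^ (1/2:ℂ)) =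
        fun t : ℝ =>
        (1 + (ρ:ℂ) / (z₀ - r) * Complex.exp ((2*Real.pi : ℝ) * Complex.I * t)) ^ (1/2:ℂ) := by
      funext t; push_cast; ring_nf
    have : Continuous (fun t : ℝ => (z₀ - r) ^ (1/2:ℂ) *
        (1 + (ρ:ℂ) / (z₀ - r) * Complex.exp (2 * Real.pi * Complex.I * t)) ^ (1/2:ℂ)) :=
      continuous_const.mul (h2 ▸ h1)
    convert this using 2 with t
    simp [Sfun, if_neg (not_lt.2 (le_of_lt hout))]

lemma Sfun_sq {z₀ r : ℂ} {ρ : ℝ} (hρ : 0 < ρ) (hr : ‖r - z₀‖ ≠ ρ) (t : ℝ) :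
    (Sfun z₀ ρ r t) ^ 2 = z₀ + (ρ:ℂ) * Complex.exp (2 * Real.pi * Complex.I * t) - r := by
  have hρ0 : (ρ:ℂ) ≠ 0 := by exact_mod_cast hρ.ne'
  have hEE : Complex.exp (Real.pi * Complex.I * t) * Complex.exp (Real.pi * Complex.I * t)
      = Complex.exp (2 * Real.pi * Complex.I * t) := by
    rw [← Complex.exp_add]; ring_nf
  have hinv : Complex.exp (-(2 * Real.pi * Complex.I * t))
      = (Complex.exp (2 * Real.pi * Complex.I * t))⁻¹ := Complex.exp_neg _
  have hE0 : Complex.exp (2 * Real.pi * Complex.I * (t:ℂ)) ≠ 0 := Complex.exp_ne_zero _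
  rcases lt_or_gt_of_ne hr with hin | hout
  · have hc : ‖-((r - z₀) / (ρ:ℂ)) * Complex.exp (-(2 * Real.pi * Complex.I * t))‖ < 1 := by
      rw [norm_mul]
      have : ‖Complex.exp (-(2 * Real.pi * Complex.I * t))‖ = 1 := by
        rw [Complex.norm_exp]; simp [Complex.mul_re, Complex.mul_im]
      rw [this, mul_one]; exact inside_abs_lt hρ hin
    have hne := ne_zero_of_abs_lt hc
    simp only [Sfun, if_pos hin]
    rw [mul_pow, mul_pow, cpow_half_sq hne]
    have hs : ((Real.sqrt ρ : ℂ)) ^ 2 = (ρ:ℂ) := by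
      rw [← Complex.ofReal_pow, Real.sq_sqrt hρ.le]
    rw [hs, sq, hEE, hinv]
    field_simp
    ring
  · have hz : z₀ - r ≠ 0 := by
      intro h0
      have : ‖r - z₀‖ = 0 := by
        rw [norm_sub_rev, h0, norm_zero]
      linarith
    have hc : ‖(ρ:ℂ) / (z₀ - r) * Complex.exp (2 * Real.pi * Complex.I * t)‖ < 1 := by
      rw [norm_mul]
      have : ‖Complex.exp (2 * Real.pi * Complex.I * (t:ℂ))‖ = 1 := by
        rw [Complex.norm_exp]; simp [Complex.mul_re, Complex.mul_im]
      rw [this, mul_one]; exact outside_abs_lt hρ hout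
    have hne := ne_zero_of_abs_lt hc
    simp only [Sfun, if_neg (not_lt.2 hout.le)]
    rw [mul_pow, cpow_half_sq hne, cpow_half_sq hz]
    field_simp
    ring

lemma Sfun_one {z₀ r : ℂ} {ρ : ℝ} :
    Sfun z₀ ρ r 1 = (if ‖r - z₀‖ < ρ then (-1:ℂ) else 1) * Sfun z₀ ρ r 0 := by
  by_cases h : ‖r - z₀‖ < ρ
  · simp only [Sfun, if_pos h]
    push_cast
    norm_num [Complex.exp_pi_mul_I, Complex.exp_two_pi_mul_I, Complex.exp_neg, Complex.exp_zero]
  · simp only [Sfun, if_neg h]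
    push_cast
    norm_num [Complex.exp_two_pi_mul_I, Complex.exp_zero]

lemma prod_map_ite_neg (m : Multiset ℂ) (P : ℂ → Prop) [DecidablePred P] :
    (m.map fun r => if P r then (-1:ℂ) else 1).prod
      = (-1:ℂ) ^ Multiset.card (m.filter P) := by
  induction m using Multiset.induction_on with
  | empty => simp
  | cons a s ih =>
    by_cases h : P a <;>
      simp [Multiset.filter_cons, h, ih, pow_succ]


/-- Let `q` be a nonzero complex polynomial with no root on the circle
of radius `ρ` about `z₀`, let `γ t = z₀ + ρ·exp(2πi t)`, and let `f` be a continuous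
square root of `q ∘ γ` on `[0,1]`. Then `f 1 = (−1)^N · f 0`, where `N` is the number of
roots of `q` (with multiplicity) in the open disc of radius `ρ` about `z₀`. -/
theorem stmt3 (q : Polynomial ℂ) (hq : q ≠ 0) (z₀ : ℂ) (ρ : ℝ) (hρ : 0 < ρ)
    (hcirc : ∀ z : ℂ, ‖z - z₀‖ = ρ → Polynomial.eval z q ≠ 0)
    (f : ℝ → ℂ) (hf : ContinuousOn f (Set.Icc 0 1))
    (hsq : ∀ t ∈ Set.Icc (0 : ℝ) 1,
      f t ^ 2 =
        Polynomial.eval (z₀ + (ρ : ℂ) * Complex.exp (2 * Real.pi * Complex.I * t)) q) :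
    f 1 =
      (-1 : ℂ) ^
          Multiset.card (q.roots.filter fun z => ‖z - z₀‖ < ρ) *
        f 0 := by
  set γ : ℝ → ℂ := fun t => z₀ + (ρ : ℂ) * Complex.exp (2 * Real.pi * Complex.I * t) with hγ
  -- roots avoid the circle
  have hroots : ∀ r ∈ q.roots, ‖r - z₀‖ ≠ ρ := by
    intro r hr habs
    exact hcirc r habs ((Polynomial.mem_roots hq).1 hr)
  -- the loop stays on the circle, so q ∘ γ never vanishes
  have habsγ : ∀ t : ℝ, ‖γ t - z₀‖ = ρ := by
    intro t
    have : γ t - z₀ = (ρ : ℂ) * Complex.exp (2 * Real.pi * Complex.I * t) := by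
      rw [hγ]; ring
    rw [this, norm_mul, Complex.norm_real, Real.norm_eq_abs, abs_of_pos hρ, Complex.norm_exp]
    simp [Complex.mul_re, Complex.mul_im]
  have hqγ : ∀ t : ℝ, Polynomial.eval (γ t) q ≠ 0 := fun t => hcirc _ (habsγ t)
  -- factorization of q
  have hlc : q.leadingCoeff ≠ 0 := Polynomial.leadingCoeff_ne_zero.2 hq
  have hfact : ∀ z : ℂ, Polynomial.eval z q
      = q.leadingCoeff * (q.roots.map fun r => z - r).prod := by
    intro z
    conv_lhs => rw [(IsAlgClosed.splits q).eq_prod_roots]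
    rw [Polynomial.eval_mul, Polynomial.eval_C, Polynomial.eval_multiset_prod,
      Multiset.map_map]
    simp
  -- the explicit square root g
  set g : ℝ → ℂ := fun t =>
    q.leadingCoeff ^ (1/2 : ℂ) * (q.roots.map fun r => Sfun z₀ ρ r t).prod with hgdef
  have hgc : Continuous g := by
    apply continuous_const.mul
    exact continuous_multiset_prod q.roots fun r hr => Sfun_continuous hρ (hroots r hr)
  have hgsq : ∀ t : ℝ, g t ^ 2 = Polynomial.eval (γ t) q := by
    intro t
    rw [hgdef]
    simp only
    have hmap : (q.roots.map fun i => Sfun z₀ ρ i t ^ 2)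
        = q.roots.map fun r => γ t - r :=
      Multiset.map_congr rfl fun r hr => Sfun_sq hρ (hroots r hr) t
    rw [mul_pow, cpow_half_sq hlc, ← Multiset.prod_map_pow, hmap, hfact (γ t)]
  have hgne : ∀ t : ℝ, g t ≠ 0 := by
    intro t h0
    exact hqγ t (by rw [← hgsq t, h0]; ring)
  -- monodromy of g
  have hg1 : g 1 = (-1 : ℂ) ^
      Multiset.card (q.roots.filter fun z => ‖z - z₀‖ < ρ) * g 0 := by
    rw [hgdef]
    simp only
    have : (q.roots.map fun r => Sfun z₀ ρ r 1)
        = q.roots.map fun r =>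
            (if ‖r - z₀‖ < ρ then (-1:ℂ) else 1) * Sfun z₀ ρ r 0 :=
      Multiset.map_congr rfl fun r _ => Sfun_one
    rw [this, Multiset.prod_map_mul, prod_map_ite_neg]
    ring
  -- the ratio u = f / g is locally constant on [0,1]
  set u : ℝ → ℂ := fun t => f t / g t with hudef
  have hfu : ∀ t : ℝ, f t = u t * g t := by
    intro t; exact (div_mul_cancel₀ (f t) (hgne t)).symm
  have huc : ContinuousOn u (Set.Icc 0 1) :=
    hf.div (hgc.continuousOn) fun t _ => hgne t
  have hu2 : ∀ t ∈ Set.Icc (0:ℝ) 1, u t = 1 ∨ u t = -1 := by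
    intro t ht
    have h1 : u t ^ 2 = 1 := by
      rw [hudef]
      simp only
      rw [div_pow, hsq t ht]
      show Polynomial.eval (γ t) q / g t ^ 2 = 1
      rw [← hgsq t, div_self (pow_ne_zero 2 (hgne t))]
    have h2 : (u t - 1) * (u t + 1) = 0 := by linear_combination h1
    rcases mul_eq_zero.1 h2 with h | h
    · left; exact sub_eq_zero.1 h
    · right; linear_combination h
  -- u 0 = u 1 by the intermediate value theorem on the real part
  have hmem0 : (0:ℝ) ∈ Set.Icc (0:ℝ) 1 := by norm_num
  have hmem1 : (1:ℝ) ∈ Set.Icc (0:ℝ) 1 := by norm_num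
  have hvc : ContinuousOn (fun t => (u t).re) (Set.Icc 0 1) :=
    Complex.continuous_re.comp_continuousOn huc
  have hvne : ∀ t ∈ Set.Icc (0:ℝ) 1, (u t).re ≠ 0 := by
    intro t ht h0
    rcases hu2 t ht with h | h <;> rw [h] at h0 <;> norm_num at h0
  have hu01 : u 0 = u 1 := by
    rcases hu2 0 hmem0 with h0 | h0 <;> rcases hu2 1 hmem1 with h1 | h1 <;>
      try (rw [h0, h1])
    · -- u 0 = 1, u 1 = -1 : contradiction
      exfalso
      have hsub : Set.Icc ((u 1).re) ((u 0).re) ⊆ (fun t => (u t).re) '' Set.Icc 0 1 :=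
        intermediate_value_Icc' (by norm_num) hvc
      have : (0:ℝ) ∈ Set.Icc ((u 1).re) ((u 0).re) := by
        rw [h0, h1]; norm_num
      obtain ⟨t, ht, hval⟩ := hsub this
      exact hvne t ht hval
    · exfalso
      have hsub : Set.Icc ((u 0).re) ((u 1).re) ⊆ (fun t => (u t).re) '' Set.Icc 0 1 :=
        intermediate_value_Icc (by norm_num) hvc
      have : (0:ℝ) ∈ Set.Icc ((u 0).re) ((u 1).re) := by
        rw [h0, h1]; norm_num
      obtain ⟨t, ht, hval⟩ := hsub this
      exact hvne t ht hval
  -- conclude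
  rw [hfu 1, hfu 0, hg1, ← hu01]
  ring
end

section
/- Let r > 0 and υ ∈ ℝ with 0 < υ ≤ 8, and let B : ℝ → ℂ be a function satisfying B(R)·(Rr)^{1/4}·e^{8√(Rr)} → i√π as R → ∞. Set C(R) = υ√(Rr), let N(R) = [[−C(R), B(R)],[B(R), C(R)]], let A = (3πi/2)·I, let T = [[0,1],[1,0]], and define M(R) = T · exp(−(A + N(R))) (matrix exponential). Then, as R → ∞: the diagonal entries M(R)₁₁ and M(R)₂₂ tend to 0, M(R)₁₂ · e^{υ√(Rr)} → i, and M(R)₂₁ · e^{−υ√(Rr)} → i. -/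
open Filter Matrix Complex

set_option maxHeartbeats 1000000 in
lemma exp_fin_two_aux (a c b lam : ℂ) (hb : b ≠ 0) (hl : lam ≠ 0)
    (h : lam ^ 2 = c ^ 2 + b ^ 2) :
    NormedSpace.exp (!![c - a, -b; -b, -c - a] : Matrix (Fin 2) (Fin 2) ℂ) =
    !![((c + lam) * Complex.exp (lam - a) - (c - lam) * Complex.exp (-lam - a)) / (2 * lam),
       b * (Complex.exp (-lam - a) - Complex.exp (lam - a)) / (2 * lam);
       b * (Complex.exp (-lam - a) - Complex.exp (lam - a)) / (2 * lam),
       ((c + lam) * Complex.exp (-lam - a) - (c - lam) * Complex.exp (lam - a)) / (2 * lam)] := by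
  set U : Matrix (Fin 2) (Fin 2) ℂ := !![b, b; c - lam, c + lam] with hU
  have hdet : U.det = 2 * b * lam := by
    simp [hU, Matrix.det_fin_two_of]; ring
  have hdet' : IsUnit U.det := by
    rw [hdet]; exact isUnit_iff_ne_zero.2 (mul_ne_zero (mul_ne_zero two_ne_zero hb) hl)
  have hinv : Invertible U := U.invertibleOfIsUnitDet hdet'
  have hconj : (!![c - a, -b; -b, -c - a] : Matrix (Fin 2) (Fin 2) ℂ)
      = U * Matrix.diagonal ![lam - a, -lam - a] * U⁻¹ := by
    rw [eq_comm, Matrix.mul_inv_eq_iff_eq_mul_of_invertible]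
    ext i j
    fin_cases i <;> fin_cases j <;>
      · simp [hU, Matrix.mul_apply, Fin.sum_univ_two, Matrix.diagonal]
        first
          | linear_combination -h
          | linear_combination
  have hdiagexp : NormedSpace.exp (Matrix.diagonal ![lam - a, -lam - a])
      = !![Complex.exp (lam - a), 0; 0, Complex.exp (-lam - a)] := by
    rw [Matrix.exp_diagonal]
    ext i j
    fin_cases i <;> fin_cases j <;>
      simp [Matrix.diagonal, ← Complex.exp_eq_exp_ℂ]
  have hUinv : U⁻¹ = (2 * b * lam)⁻¹ • !![c + lam, -b; -(c - lam), b] := by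
    rw [Matrix.inv_def, hdet, Matrix.adjugate_fin_two]
    simp [hU]
  rw [hconj, Matrix.exp_conj U _ ((Matrix.isUnit_iff_isUnit_det U).2 hdet'), hdiagexp, hUinv]
  ext i j
  fin_cases i <;> fin_cases j <;>
    · simp [hU, Matrix.mul_apply, Fin.sum_univ_two, Matrix.smul_apply]
      field_simp
      first
        | ring1
        | linear_combination (-2*lam*(Complex.exp (lam - a) - Complex.exp (-lam - a))) * h
        | linear_combination (-(Complex.exp (lam - a) - Complex.exp (-lam - a))) * h


set_option maxHeartbeats 1000000 in
lemma main_aux (c : ℝ → ℝ) (b : ℝ → ℂ) (g : ℝ → ℝ) (a : ℂ)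
    (ha : Complex.exp (-a) = Complex.I) (hare : a.re = 0)
    (hc : Tendsto c atTop atTop)
    (hg : Tendsto g atTop (nhds 0))
    (hbg : ∀ᶠ R in atTop, ‖b R‖ * Real.exp (c R) ≤ g R)
    (hbne : ∀ᶠ R in atTop, b R ≠ 0)
    (M : ℝ → Matrix (Fin 2) (Fin 2) ℂ)
    (hM : ∀ R, M R = !![0, 1; 1, 0] *
      NormedSpace.exp (!![(c R : ℂ) - a, -(b R); -(b R), -(c R : ℂ) - a])) :
    Tendsto (fun R : ℝ => M R 0 0) atTop (nhds 0) ∧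
    Tendsto (fun R : ℝ => M R 1 1) atTop (nhds 0) ∧
    Tendsto (fun R : ℝ => M R 0 1 * Real.exp (c R)) atTop (nhds Complex.I) ∧
    Tendsto (fun R : ℝ => M R 1 0 * Real.exp (-(c R))) atTop (nhds Complex.I) := by
  set u : ℝ → ℂ := fun R => (b R) ^ 2 / ((c R : ℂ)) ^ 2 with hu_def
  set w : ℝ → ℂ := fun R => Complex.log (1 + u R) / 2 with hw_def
  set lam : ℝ → ℂ := fun R => ((c R : ℂ)) * Complex.exp (w R) with hlam_def
  -- b tends to 0
  have hb0 : Tendsto b atTop (nhds 0) := by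
    refine squeeze_zero_norm' ?_ hg
    filter_upwards [hbg, hc.eventually_ge_atTop 0] with R h1 h2
    calc ‖b R‖ ≤ ‖b R‖ * Real.exp (c R) :=
          le_mul_of_one_le_right (norm_nonneg _) (Real.one_le_exp h2)
    _ ≤ g R := h1
  have hbn2 : Tendsto (fun R => 2 * ‖b R‖ ^ 2) atTop (nhds 0) := by
    have := ((hb0.norm.pow 2).const_mul 2)
    simpa using this
  -- u tends to 0
  have hu0 : Tendsto u atTop (nhds 0) := by
    refine squeeze_zero_norm' ?_ (by simpa using hb0.norm.pow 2)
    filter_upwards [hc.eventually_ge_atTop 1] with R h1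
    have hpos : (1:ℝ) ≤ |c R| := le_trans h1 (le_abs_self _)
    have : ‖u R‖ = ‖b R‖ ^ 2 / |c R| ^ 2 := by
      simp [hu_def, norm_div, norm_pow, Complex.norm_real]
    rw [this]
    exact div_le_self (by positivity) (by nlinarith [hpos])
  -- w tends to 0
  have hw0 : Tendsto w atTop (nhds 0) := by
    have h1 : Tendsto (fun R => 1 + u R) atTop (nhds (1 : ℂ)) := by
      simpa using (hu0.const_add 1)
    have h2 : Tendsto (fun R => Complex.log (1 + u R)) atTop (nhds 0) := by
      simpa using (Filter.Tendsto.clog h1 Complex.one_mem_slitPlane)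
    simpa [hw_def] using h2.div_const 2
  -- auxiliary functions for goals 3 and 4
  set T1 : ℝ → ℂ := fun R => (Complex.exp (-(w R)) + 1) / 2 * Complex.exp (-a) *
      Complex.exp (-(lam R - (c R : ℂ))) with hT1_def
  set T2 : ℝ → ℂ := fun R => ((lam R - (c R : ℂ)) / (2 * lam R)) *
      Complex.exp (lam R + (c R : ℂ) - a) with hT2_def
  set S1 : ℝ → ℂ := fun R => (Complex.exp (-(w R)) + 1) / 2 * Complex.exp (-a) *
      Complex.exp (lam R - (c R : ℂ)) with hS1_def
  set S2 : ℝ → ℂ := fun R => ((lam R - (c R : ℂ)) / (2 * lam R)) *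
      Complex.exp (-(lam R) - (c R : ℂ) - a) with hS2_def
  have key : ∀ᶠ R in atTop,
      (‖M R 0 0‖ ≤ Real.exp 1 * g R) ∧
      (‖M R 1 1‖ ≤ Real.exp 1 * g R) ∧
      (M R 0 1 * ((Real.exp (c R) : ℝ) : ℂ) = T1 R + T2 R) ∧
      (‖T2 R‖ ≤ Real.exp 1 * g R ^ 2) ∧
      (M R 1 0 * ((Real.exp (-(c R)) : ℝ) : ℂ) = S1 R + S2 R) ∧
      (‖S2 R‖ ≤ Real.exp 1 * ‖lam R - (c R : ℂ)‖) ∧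
      (‖lam R - (c R : ℂ)‖ ≤ 2 * ‖b R‖ ^ 2) := by
    have hu_half : ∀ᶠ R in atTop, ‖u R‖ ≤ 1/2 :=
      Filter.Tendsto.eventually_le_const (by norm_num : (0:ℝ) < 1/2) (by simpa using hu0.norm)
    have hg_le1 : ∀ᶠ R in atTop, g R ≤ 1 :=
      Filter.Tendsto.eventually_le_const zero_lt_one hg
    filter_upwards [hc.eventually_ge_atTop 2, hbg, hbne, hu_half, hg_le1]
      with R hc2 hbgR hbneR huR hgR
    have hc0 : (0:ℝ) < c R := by linarith
    have hc1 : (1:ℝ) ≤ c R := by linarith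
    have hcne : ((c R : ℂ)) ≠ 0 := Complex.ofReal_ne_zero.2 (ne_of_gt hc0)
    have hgnn : 0 ≤ g R := le_trans (by positivity) hbgR
    have hb1 : ‖b R‖ ≤ g R := by
      calc ‖b R‖ ≤ ‖b R‖ * Real.exp (c R) :=
            le_mul_of_one_le_right (norm_nonneg _) (Real.one_le_exp hc0.le)
      _ ≤ g R := hbgR
    have hu_eq : ‖u R‖ = ‖b R‖ ^ 2 / (c R) ^ 2 := by
      simp [hu_def, norm_div, norm_pow, Complex.norm_real, abs_of_pos hc0]
    have h1u : (1 : ℂ) + u R ≠ 0 := by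
      intro h
      have : u R = -1 := by linear_combination h
      rw [this] at huR
      norm_num at huR
    have hwnorm : ‖w R‖ ≤ (3/4) * ‖u R‖ := by
      have := Complex.norm_log_one_add_half_le_self (z := u R) (by simpa using huR)
      calc ‖w R‖ = ‖Complex.log (1 + u R)‖ / 2 := by
            simp [hw_def]
      _ ≤ (3/2) * ‖u R‖ / 2 := by linarith
      _ = (3/4) * ‖u R‖ := by ring
    have hw1 : ‖w R‖ ≤ 1 := by
      have : ‖u R‖ ≤ 1/2 := by simpa using huR
      nlinarith [norm_nonneg (u R)]
    have hexpw1 : ‖Complex.exp (w R) - 1‖ ≤ 2 * ‖w R‖ := by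
      simpa using
        Complex.norm_exp_sub_one_le (x := w R) (by simpa using hw1)
    have hdelta_eq : lam R - (c R : ℂ) = (c R : ℂ) * (Complex.exp (w R) - 1) := by
      simp [hlam_def]; ring
    have hdelta : ‖lam R - (c R : ℂ)‖ ≤ 2 * ‖b R‖ ^ 2 / c R := by
      rw [hdelta_eq]
      have : ‖(c R : ℂ) * (Complex.exp (w R) - 1)‖ = c R * ‖Complex.exp (w R) - 1‖ := by
        simp [norm_mul, Complex.norm_real, abs_of_pos hc0]
      rw [this]
      calc c R * ‖Complex.exp (w R) - 1‖ ≤ c R * (2 * ((3/4) * ‖u R‖)) := by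
            have h2 : ‖Complex.exp (w R) - 1‖ ≤ 2 * ((3/4) * ‖u R‖) := by
              calc ‖Complex.exp (w R) - 1‖ ≤ 2 * ‖w R‖ := hexpw1
              _ ≤ 2 * ((3/4) * ‖u R‖) := by linarith
            exact mul_le_mul_of_nonneg_left h2 hc0.le
      _ = (3/2) * (c R * ‖u R‖) := by ring
      _ ≤ 2 * ‖b R‖ ^ 2 / c R := by
            have e1 : c R * ‖u R‖ = ‖b R‖ ^ 2 / c R := by
              rw [hu_eq]; field_simp
            rw [e1]
            have e2 : 0 ≤ ‖b R‖ ^ 2 / c R := by positivity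
            have e3 : 2 * ‖b R‖ ^ 2 / c R = 2 * (‖b R‖ ^ 2 / c R) := by ring
            linarith
    have hbR2 : ‖b R‖ ^ 2 ≤ 1 := by nlinarith [norm_nonneg (b R)]
    have hdelta2 : ‖lam R - (c R : ℂ)‖ ≤ 2 * ‖b R‖ ^ 2 := by
      calc ‖lam R - (c R : ℂ)‖ ≤ 2 * ‖b R‖ ^ 2 / c R := hdelta
      _ ≤ 2 * ‖b R‖ ^ 2 / 1 := by gcongr
      _ = 2 * ‖b R‖ ^ 2 := by ring
    have hdelta1 : ‖lam R - (c R : ℂ)‖ ≤ 1 := by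
      have h4 : 2 * ‖b R‖ ^ 2 / c R ≤ 1 := by
        rw [div_le_one hc0]; nlinarith
      linarith [hdelta]
    have hre_abs : |(lam R - (c R : ℂ)).re| ≤ ‖lam R - (c R : ℂ)‖ := by
      simpa using Complex.abs_re_le_norm (lam R - (c R : ℂ))
    have hre_eq : (lam R).re = c R + (lam R - (c R : ℂ)).re := by
      simp [Complex.sub_re]
    have hre_low : c R - 1 ≤ (lam R).re := by
      have := abs_le.1 hre_abs
      linarith [this.1]
    have hre_hi : (lam R).re ≤ c R + 1 := by
      have := abs_le.1 hre_abs
      linarith [this.2]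
    have hre_pos : 1 ≤ (lam R).re := by linarith
    have hlamnz : lam R ≠ 0 := by
      intro h
      rw [h] at hre_pos
      simp at hre_pos
      linarith
    have hlamnorm : 1 ≤ ‖lam R‖ := by
      calc (1:ℝ) ≤ (lam R).re := hre_pos
      _ ≤ |(lam R).re| := le_abs_self _
      _ ≤ ‖lam R‖ := by simpa using Complex.abs_re_le_norm (lam R)
    have hsq : lam R ^ 2 = ((c R : ℂ)) ^ 2 + (b R) ^ 2 := by
      have h2 : Complex.exp (w R) ^ 2 = 1 + u R := by
        rw [sq, ← Complex.exp_add, hw_def]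
        have : Complex.log (1 + u R) / 2 + Complex.log (1 + u R) / 2
            = Complex.log (1 + u R) := by ring
        rw [this, Complex.exp_log h1u]
      calc lam R ^ 2 = ((c R : ℂ)) ^ 2 * (Complex.exp (w R) ^ 2) := by
            rw [hlam_def]; ring
      _ = ((c R : ℂ)) ^ 2 * (1 + u R) := by rw [h2]
      _ = ((c R : ℂ)) ^ 2 + (b R) ^ 2 := by
            rw [hu_def]; field_simp
    have hEform := exp_fin_two_aux a (c R) (b R) (lam R) hbneR hlamnz hsq
    have hM00 : M R 0 0 = b R * (Complex.exp (-(lam R) - a) - Complex.exp (lam R - a))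
        / (2 * lam R) := by
      rw [hM R, hEform]
      simp [Matrix.mul_apply, Fin.sum_univ_two]
    have hM11 : M R 1 1 = b R * (Complex.exp (-(lam R) - a) - Complex.exp (lam R - a))
        / (2 * lam R) := by
      rw [hM R, hEform]
      simp [Matrix.mul_apply, Fin.sum_univ_two]
    have hM01 : M R 0 1 = ((c R + lam R) * Complex.exp (-(lam R) - a)
        - (c R - lam R) * Complex.exp (lam R - a)) / (2 * lam R) := by
      rw [hM R, hEform]
      simp [Matrix.mul_apply, Fin.sum_univ_two]
    have hM10 : M R 1 0 = ((c R + lam R) * Complex.exp (lam R - a)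
        - (c R - lam R) * Complex.exp (-(lam R) - a)) / (2 * lam R) := by
      rw [hM R, hEform]
      simp [Matrix.mul_apply, Fin.sum_univ_two]
    have hE1 : ‖Complex.exp (lam R - a)‖ = Real.exp ((lam R).re) := by
      rw [Complex.norm_exp]
      simp [Complex.sub_re, hare]
    have hE2 : ‖Complex.exp (-(lam R) - a)‖ = Real.exp (-((lam R).re)) := by
      rw [Complex.norm_exp]
      simp [Complex.sub_re, Complex.neg_re, hare]
    have hediff : ‖Complex.exp (-(lam R) - a) - Complex.exp (lam R - a)‖
        ≤ 2 * Real.exp (c R + 1) := by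
      calc ‖Complex.exp (-(lam R) - a) - Complex.exp (lam R - a)‖
          ≤ ‖Complex.exp (-(lam R) - a)‖ + ‖Complex.exp (lam R - a)‖ := norm_sub_le _ _
      _ = Real.exp (-((lam R).re)) + Real.exp ((lam R).re) := by rw [hE1, hE2]
      _ ≤ Real.exp (c R + 1) + Real.exp (c R + 1) := by
            gcongr <;> linarith
      _ = 2 * Real.exp (c R + 1) := by ring
    have hdiag : ‖b R * (Complex.exp (-(lam R) - a) - Complex.exp (lam R - a))
        / (2 * lam R)‖ ≤ Real.exp 1 * g R := by
      rw [norm_div, norm_mul, norm_mul]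
      have h2l : ‖(2:ℂ)‖ * ‖lam R‖ = 2 * ‖lam R‖ := by norm_num
      rw [h2l]
      calc ‖b R‖ * ‖Complex.exp (-(lam R) - a) - Complex.exp (lam R - a)‖ / (2 * ‖lam R‖)
          ≤ ‖b R‖ * (2 * Real.exp (c R + 1)) / (2 * 1) := by
            gcongr
      _ = Real.exp 1 * (‖b R‖ * Real.exp (c R)) := by rw [Real.exp_add]; ring
      _ ≤ Real.exp 1 * g R := by
            have := Real.exp_pos 1
            nlinarith
    have hK1 : Complex.exp (-(w R)) = (c R : ℂ) / lam R := by
      rw [eq_div_iff hlamnz]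
      simp only [hlam_def]
      rw [Complex.exp_neg]
      field_simp
    have hK2 : Complex.exp (-a) * Complex.exp (-(lam R - (c R : ℂ)))
        = Complex.exp (-(lam R) - a) * Complex.exp ((c R : ℂ)) := by
      rw [← Complex.exp_add, ← Complex.exp_add]
      congr 1
      ring
    have hK3 : Complex.exp (lam R + (c R : ℂ) - a)
        = Complex.exp (lam R - a) * Complex.exp ((c R : ℂ)) := by
      rw [← Complex.exp_add]
      congr 1
      ring
    have hK2' : Complex.exp (-a) * Complex.exp (lam R - (c R : ℂ))
        = Complex.exp (lam R - a) * Complex.exp (-((c R : ℂ))) := by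
      rw [← Complex.exp_add, ← Complex.exp_add]
      congr 1
      ring
    have hK3' : Complex.exp (-(lam R) - (c R : ℂ) - a)
        = Complex.exp (-(lam R) - a) * Complex.exp (-((c R : ℂ))) := by
      rw [← Complex.exp_add]
      congr 1
      ring
    refine ⟨?_, ?_, ?_, ?_, ?_, ?_, hdelta2⟩
    · rw [hM00]; exact hdiag
    · rw [hM11]; exact hdiag
    · -- goal 3 identity
      rw [hM01, Complex.ofReal_exp]
      simp only [hT1_def, hT2_def]
      rw [mul_assoc ((Complex.exp (-(w R)) + 1) / 2), hK2, hK3, hK1]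
      field_simp
      ring
    · -- T2 bound
      have hnT2 : ‖T2 R‖ = ‖lam R - (c R : ℂ)‖ / (2 * ‖lam R‖)
          * Real.exp ((lam R).re + c R) := by
        simp only [hT2_def]
        rw [norm_mul, norm_div, norm_mul]
        rw [Complex.norm_exp]
        have : (lam R + (c R : ℂ) - a).re = (lam R).re + c R := by
          simp [Complex.add_re, Complex.sub_re, hare]
        rw [this]
        norm_num
      rw [hnT2]
      have h8 : ‖lam R - (c R : ℂ)‖ * Real.exp (c R) * Real.exp (c R) ≤ g R ^ 2 := by
        calc ‖lam R - (c R : ℂ)‖ * Real.exp (c R) * Real.exp (c R)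
            ≤ 2 * ‖b R‖ ^ 2 / c R * Real.exp (c R) * Real.exp (c R) := by
              gcongr
        _ = 2 / c R * ((‖b R‖ * Real.exp (c R)) * (‖b R‖ * Real.exp (c R))) := by ring
        _ ≤ 2 / c R * (g R * g R) := by
              have hmm : (‖b R‖ * Real.exp (c R)) * (‖b R‖ * Real.exp (c R)) ≤ g R * g R :=
                mul_le_mul hbgR hbgR (by positivity) hgnn
              have h2c : (0:ℝ) ≤ 2 / c R := by positivity
              exact mul_le_mul_of_nonneg_left hmm h2c
        _ ≤ 1 * (g R * g R) := by
              have hd1 : 2 / c R ≤ 1 := by rw [div_le_one hc0]; linarith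
              nlinarith [mul_nonneg hgnn hgnn]
        _ = g R ^ 2 := by ring
      calc ‖lam R - (c R : ℂ)‖ / (2 * ‖lam R‖) * Real.exp ((lam R).re + c R)
          ≤ ‖lam R - (c R : ℂ)‖ / (2 * 1) * Real.exp ((c R + 1) + c R) := by
            gcongr
      _ = Real.exp 1 / 2 * (‖lam R - (c R : ℂ)‖ * Real.exp (c R) * Real.exp (c R)) := by
            rw [show (c R + 1) + c R = c R + c R + 1 by ring, Real.exp_add, Real.exp_add]
            ring
      _ ≤ Real.exp 1 / 2 * g R ^ 2 := by
            have := Real.exp_pos 1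
            nlinarith
      _ ≤ Real.exp 1 * g R ^ 2 := by
            have h9 : (0:ℝ) ≤ g R ^ 2 := sq_nonneg _
            have := Real.exp_pos 1
            nlinarith
    · -- goal 4 identity
      rw [hM10, Complex.ofReal_exp]
      simp only [hS1_def, hS2_def]
      rw [show ((-(c R) : ℝ) : ℂ) = -((c R : ℂ)) by push_cast; ring]
      rw [mul_assoc ((Complex.exp (-(w R)) + 1) / 2), hK2', hK3', hK1]
      field_simp
      ring
    · -- S2 bound
      have hnS2 : ‖S2 R‖ = ‖lam R - (c R : ℂ)‖ / (2 * ‖lam R‖)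
          * Real.exp (-((lam R).re) - c R) := by
        simp only [hS2_def]
        rw [norm_mul, norm_div, norm_mul]
        rw [Complex.norm_exp]
        have : (-(lam R) - (c R : ℂ) - a).re = -((lam R).re) - c R := by
          simp [Complex.sub_re, Complex.neg_re, hare]
        rw [this]
        norm_num
      rw [hnS2]
      calc ‖lam R - (c R : ℂ)‖ / (2 * ‖lam R‖) * Real.exp (-((lam R).re) - c R)
          ≤ ‖lam R - (c R : ℂ)‖ / (2 * 1) * Real.exp 1 := by
            gcongr
            linarith
      _ ≤ Real.exp 1 * ‖lam R - (c R : ℂ)‖ := by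
            have := norm_nonneg (lam R - (c R : ℂ))
            have := Real.exp_pos 1
            nlinarith
  -- limits
  have hdel0 : Tendsto (fun R => lam R - (c R : ℂ)) atTop (nhds 0) :=
    squeeze_zero_norm' (key.mono fun R h => h.2.2.2.2.2.2) hbn2
  have hexpw : Tendsto (fun R => Complex.exp (-(w R))) atTop (nhds 1) := by
    have h := (hw0.neg).cexp
    simpa using h
  have hexpd : Tendsto (fun R => Complex.exp (-(lam R - (c R : ℂ)))) atTop (nhds 1) := by
    have h := (hdel0.neg).cexp
    simpa using h
  have hexpd' : Tendsto (fun R => Complex.exp (lam R - (c R : ℂ))) atTop (nhds 1) := by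
    have h := hdel0.cexp
    simpa using h
  have hfront : Tendsto (fun R => (Complex.exp (-(w R)) + 1) / 2 * Complex.exp (-a))
      atTop (nhds Complex.I) := by
    have h := ((hexpw.add_const (1:ℂ)).div_const 2).mul_const (Complex.exp (-a))
    have h2 : ((1:ℂ) + 1) / 2 * Complex.exp (-a) = Complex.I := by
      rw [ha]; norm_num
    rwa [h2] at h
  have hT1tend : Tendsto T1 atTop (nhds Complex.I) := by
    have h := hfront.mul hexpd
    simpa [hT1_def] using h
  have hS1tend : Tendsto S1 atTop (nhds Complex.I) := by
    have h := hfront.mul hexpd'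
    simpa [hS1_def] using h
  have hT2tend : Tendsto T2 atTop (nhds 0) := by
    refine squeeze_zero_norm' (key.mono fun R h => h.2.2.2.1) ?_
    have h := (hg.pow 2).const_mul (Real.exp 1)
    simpa using h
  have hS2tend : Tendsto S2 atTop (nhds 0) := by
    refine squeeze_zero_norm' (key.mono fun R h => h.2.2.2.2.2.1) ?_
    have h := hdel0.norm.const_mul (Real.exp 1)
    simpa using h
  refine ⟨?_, ?_, ?_, ?_⟩
  · refine squeeze_zero_norm' (key.mono fun R h => h.1) ?_
    have h := hg.const_mul (Real.exp 1)
    simpa using h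
  · refine squeeze_zero_norm' (key.mono fun R h => h.2.1) ?_
    have h := hg.const_mul (Real.exp 1)
    simpa using h
  · have h := hT1tend.add hT2tend
    rw [add_zero] at h
    exact h.congr' (key.mono fun R hk => (hk.2.2.1).symm)
  · have h := hS1tend.add hS2tend
    rw [add_zero] at h
    exact h.congr' (key.mono fun R hk => (hk.2.2.2.2.1).symm)

/-- Let `C(R) = υ√(Rr)`, `N(R) = [[−C(R), B(R)], [B(R), C(R)]]`,
`A = (3πi/2)·I`, `T = [[0,1],[1,0]]`, and `M(R) = T · exp(−(A + N(R)))`, where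
`B(R)·(Rr)^{1/4}·e^{8√(Rr)} → i√π` as `R → ∞` and `0 < υ ≤ 8`. Then the diagonal
entries of `M(R)` tend to `0`, `M(R)₁₂·e^{υ√(Rr)} → i` and `M(R)₂₁·e^{−υ√(Rr)} → i`. -/
theorem stmt13 (r : ℝ) (hr : 0 < r) (υ : ℝ) (hυ0 : 0 < υ) (hυ8 : υ ≤ 8)
    (B : ℝ → ℂ)
    (hB : Tendsto
      (fun R : ℝ => B R * ((R * r) ^ ((1 : ℝ) / 4) : ℝ) * Real.exp (8 * Real.sqrt (R * r)))
      atTop (nhds (Complex.I * (Real.sqrt Real.pi : ℂ))))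
    (M : ℝ → Matrix (Fin 2) (Fin 2) ℂ)
    (hM : ∀ R : ℝ, M R =
      !![0, 1; 1, 0] *
        NormedSpace.exp
          (-(((3 * (Real.pi : ℂ) * Complex.I / 2) • (1 : Matrix (Fin 2) (Fin 2) ℂ)) +
            !![-((υ * Real.sqrt (R * r) : ℝ) : ℂ), B R;
               B R, ((υ * Real.sqrt (R * r) : ℝ) : ℂ)]))) :
    Tendsto (fun R : ℝ => M R 0 0) atTop (nhds 0) ∧
    Tendsto (fun R : ℝ => M R 1 1) atTop (nhds 0) ∧
    Tendsto (fun R : ℝ => M R 0 1 * Real.exp (υ * Real.sqrt (R * r)))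
      atTop (nhds Complex.I) ∧
    Tendsto (fun R : ℝ => M R 1 0 * Real.exp (-(υ * Real.sqrt (R * r))))
      atTop (nhds Complex.I) := by
  have hRr : Tendsto (fun R : ℝ => R * r) atTop atTop :=
    Tendsto.atTop_mul_const hr tendsto_id
  have hs : Tendsto (fun R : ℝ => Real.sqrt (R * r)) atTop atTop := by
    have h2 : Tendsto Real.sqrt atTop atTop := by
      refine tendsto_atTop_atTop.2 fun b => ⟨max (b ^ 2) 0, fun x hx => ?_⟩
      calc b ≤ |b| := le_abs_self b
      _ = Real.sqrt (b ^ 2) := (Real.sqrt_sq_eq_abs b).symm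
      _ ≤ Real.sqrt x := Real.sqrt_le_sqrt (le_trans (le_max_left _ _) hx)
    exact h2.comp hRr
  have hcTop : Tendsto (fun R : ℝ => υ * Real.sqrt (R * r)) atTop atTop :=
    hs.const_mul_atTop hυ0
  have ha : Complex.exp (-(3 * (Real.pi : ℂ) * Complex.I / 2)) = Complex.I := by
    have h : (-(3 * (Real.pi : ℂ) * Complex.I / 2))
        = ((-(3 * Real.pi / 2) : ℝ) : ℂ) * Complex.I := by
      push_cast; ring
    rw [h, Complex.exp_mul_I, ← Complex.ofReal_cos, ← Complex.ofReal_sin]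
    rw [show (-(3 * Real.pi / 2) : ℝ) = -(Real.pi + Real.pi / 2) by ring]
    rw [Real.cos_neg, Real.sin_neg, Real.cos_add, Real.sin_add]
    simp
  have hare : (3 * (Real.pi : ℂ) * Complex.I / 2).re = 0 := by
    simp
  have hg0 : Tendsto (fun R : ℝ => ‖B R‖ * Real.exp (8 * Real.sqrt (R * r)))
      atTop (nhds 0) := by
    have hq : Tendsto (fun R : ℝ => (((R * r) ^ ((1:ℝ)/4))⁻¹ : ℝ)) atTop (nhds 0) := by
      have h1 : Tendsto (fun R : ℝ => ((R * r) ^ ((1:ℝ)/4) : ℝ)) atTop atTop :=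
        (tendsto_rpow_atTop (by norm_num)).comp hRr
      exact h1.inv_tendsto_atTop
    have hmul := hB.norm.mul hq
    rw [mul_zero] at hmul
    refine hmul.congr' ?_
    filter_upwards [hRr.eventually_ge_atTop 1] with R hR1
    have hx : (0:ℝ) < (R * r) ^ ((1:ℝ)/4) :=
      Real.rpow_pos_of_pos (by linarith) _
    rw [norm_mul, norm_mul, Complex.norm_real, Complex.norm_real,
      Real.norm_eq_abs, Real.norm_eq_abs, abs_of_pos hx,
      abs_of_pos (Real.exp_pos _)]
    field_simp
  have hbg : ∀ᶠ R in atTop,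
      ‖B R‖ * Real.exp (υ * Real.sqrt (R * r))
        ≤ ‖B R‖ * Real.exp (8 * Real.sqrt (R * r)) := by
    refine Filter.Eventually.of_forall fun R => ?_
    have h1 : υ * Real.sqrt (R * r) ≤ 8 * Real.sqrt (R * r) :=
      mul_le_mul_of_nonneg_right hυ8 (Real.sqrt_nonneg _)
    exact mul_le_mul_of_nonneg_left (Real.exp_le_exp.2 h1) (norm_nonneg _)
  have hbne : ∀ᶠ R in atTop, B R ≠ 0 := by
    have hne : Complex.I * ((Real.sqrt Real.pi : ℝ) : ℂ) ≠ 0 := by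
      refine mul_ne_zero Complex.I_ne_zero ?_
      rw [Complex.ofReal_ne_zero]
      exact ne_of_gt (Real.sqrt_pos.2 Real.pi_pos)
    filter_upwards [hB.eventually_ne hne] with R hR h0
    apply hR
    rw [h0]
    simp
  have hM' : ∀ R : ℝ, M R = !![0, 1; 1, 0] *
      NormedSpace.exp
        (!![((υ * Real.sqrt (R * r) : ℝ) : ℂ) - (3 * (Real.pi : ℂ) * Complex.I / 2), -(B R);
           -(B R), -((υ * Real.sqrt (R * r) : ℝ) : ℂ) - (3 * (Real.pi : ℂ) * Complex.I / 2)]) := by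
    intro R
    rw [hM R]
    congr 2
    ext i j
    fin_cases i <;> fin_cases j <;>
      simp [Matrix.smul_apply, Matrix.one_apply] <;> ring
  exact main_aux (fun R => υ * Real.sqrt (R * r)) B
    (fun R => ‖B R‖ * Real.exp (8 * Real.sqrt (R * r)))
    (3 * (Real.pi : ℂ) * Complex.I / 2) ha hare hcTop hg0 hbg hbne M hM'
end
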